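/- Let G be a simple graph that is the union of cycles γ₁, …, γₙ such that for all i, j there exists a chain r₁ = i, r₂, …, r_m = j with each intersection γ_{r_k} ∩ γ_{r_{k+1}} containing at least one edge. Then G is connected and has no separating vertex, i.e., deleting any single vertex leaves G connected. -/

import Mathlib

open SimpleGraph Walk

section aux
variable {V : Type*} [DecidableEq V] {G : SimpleGraph V}

lemma reach_induce {s : Set V} : ∀ {a b : V} (p : G.Walk a b),
    (∀ y ∈ p.support, y ∈ s) → ∀ (ha : a ∈ s) (hb : b ∈ s),
    (G.induce s).Reachable ⟨a, ha⟩ ⟨b, hb⟩ := by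
  intro a b p
  induction p with
  | nil => intro _ _ _; exact Reachable.refl _
  | @cons a c b h q ih =>
    intro hs ha hb
    have hc : c ∈ s := hs _ (by simp)
    have hadj : (G.induce s).Adj ⟨a, ha⟩ ⟨c, hc⟩ := h
    exact hadj.reachable.trans (ih (fun y hy => hs y (by simp [hy])) hc hb)

lemma reach_in_walk {s : Set V} {p q : V} (t : G.Walk p q) (ht : ∀ y ∈ t.support, y ∈ s)
    {a b : V} (hat : a ∈ t.support) (hbt : b ∈ t.support) (ha : a ∈ s) (hb : b ∈ s) :
    (G.induce s).Reachable ⟨a, ha⟩ ⟨b, hb⟩ := by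
  have h1 := reach_induce (t.takeUntil a hat)
    (fun y hy => ht y (t.support_takeUntil_subset hat hy)) (ht _ t.start_mem_support) ha
  have h2 := reach_induce (t.takeUntil b hbt)
    (fun y hy => ht y (t.support_takeUntil_subset hbt hy)) (ht _ t.start_mem_support) hb
  exact h1.symm.trans h2

lemma mem_support_rotate {u x : V} (c : G.Walk u u) (hx : x ∈ c.support) {a : V}
    (ha : a ∈ c.support) : a ∈ (c.rotate x hx).support := by
  rw [Walk.rotate, Walk.mem_support_append_iff]
  conv at ha => rw [← c.take_spec hx]
  rw [Walk.mem_support_append_iff] at ha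
  exact ha.symm

lemma cycle_avoid {x u : V} {c : G.Walk u u} (hc : c.IsCycle) {a b : V}
    (ha : a ∈ c.support) (hb : b ∈ c.support) (hax : a ≠ x) (hbx : b ≠ x) :
    (G.induce {y : V | y ≠ x}).Reachable ⟨a, hax⟩ ⟨b, hbx⟩ := by
  obtain ⟨p', q', t, hxt, hsub⟩ : ∃ (p' q' : V) (t : G.Walk p' q'), x ∉ t.support ∧
      ∀ y ∈ c.support, y ≠ x → y ∈ t.support := by
    by_cases hx : x ∈ c.support
    · have hd := hc.rotate hx
      have hdn : ¬ (c.rotate x hx).Nil := by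
        rw [Walk.not_nil_iff_lt_length]; have := hd.three_le_length; omega
      obtain ⟨w, hadj, q, hq⟩ := Walk.not_nil_iff.mp hdn
      have hqsup : (c.rotate x hx).support = x :: q.support := by rw [hq, Walk.support_cons]
      have hqnodup : q.support.Nodup := by
        have h2 := hd.support_nodup
        rwa [hqsup] at h2
      have hqrn : ¬ q.reverse.Nil := by
        rw [Walk.not_nil_iff_lt_length, Walk.length_reverse]
        have h3 := hd.three_le_length
        have h4 : (c.rotate x hx).length = q.length + 1 := by rw [hq]; simp
        omega
      obtain ⟨w', hadj', t, ht⟩ := Walk.not_nil_iff.mp hqrn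
      have hts : q.support.reverse = x :: t.support := by
        rw [← Walk.support_reverse, ht, Walk.support_cons]
      have hxt : x ∉ t.support := by
        have h5 : q.support.reverse.Nodup := by rwa [List.nodup_reverse]
        rw [hts] at h5; exact (List.nodup_cons.mp h5).1
      refine ⟨w', w, t, hxt, ?_⟩
      intro y hy hyx
      have hyd : y ∈ (c.rotate x hx).support := mem_support_rotate c hx hy
      rw [hqsup] at hyd
      rcases List.mem_cons.mp hyd with h | h
      · exact absurd h hyx
      · have h6 : y ∈ q.support.reverse := List.mem_reverse.mpr h
        rw [hts] at h6
        rcases List.mem_cons.mp h6 with h' | h'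
        · exact absurd h' hyx
        · exact h'
    · exact ⟨u, u, c, hx, fun y hy _ => hy⟩
  exact reach_in_walk t (fun y hy => show y ≠ x from fun hyx => hxt (hyx ▸ hy)) (hsub a ha hax) (hsub b hb hbx) hax hbx

end aux

theorem stmt_2 {V : Type*} [Fintype V] [DecidableEq V] (G : SimpleGraph V)
    (n : ℕ) (hn : 0 < n) (v : Fin n → V) (γ : ∀ i : Fin n, G.Walk (v i) (v i))
    (hcyc : ∀ i, (γ i).IsCycle)
    (hvert : ∀ x : V, ∃ i, x ∈ (γ i).support)
    (hedge : ∀ e ∈ G.edgeSet, ∃ i, e ∈ (γ i).edges)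
    (hchain : ∀ i j : Fin n, ∃ (m : ℕ) (r : Fin (m + 1) → Fin n),
      r 0 = i ∧ r (Fin.last m) = j ∧
      ∀ k : Fin m, ∃ e : Sym2 V,
        e ∈ (γ (r k.castSucc)).edges ∧ e ∈ (γ (r k.succ)).edges) :
    G.Connected ∧ ∀ x : V, (G.induce {y : V | y ≠ x}).Connected := by
  have i0 : Fin n := ⟨0, hn⟩
  constructor
  · rw [connected_iff]
    refine ⟨fun a b => ?_, ⟨v i0⟩⟩
    obtain ⟨i, hai⟩ := hvert a
    obtain ⟨j, hbj⟩ := hvert b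
    obtain ⟨m, r, hr0, hrl, hrk⟩ := hchain i j
    have key : ∀ k : Fin (m+1), G.Reachable a (v (r k)) := by
      intro k
      induction k using Fin.induction with
      | zero =>
        rw [hr0]
        exact (Reachable.symm ⟨(γ i).takeUntil a hai⟩)
      | succ k ihk =>
        obtain ⟨e, he1, he2⟩ := hrk k
        obtain ⟨⟨p, q⟩, rfl⟩ : ∃ z : V × V, e = s(z.1, z.2) :=
          ⟨e.out, e.out_eq.symm⟩
        have hp1 : p ∈ (γ (r k.castSucc)).support :=
          Walk.fst_mem_support_of_mem_edges _ he1
        have hp2 : p ∈ (γ (r k.succ)).support :=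
          Walk.fst_mem_support_of_mem_edges _ he2
        exact ihk.trans (Reachable.trans ⟨(γ (r k.castSucc)).takeUntil p hp1⟩
          (Reachable.symm ⟨(γ (r k.succ)).takeUntil p hp2⟩))
    have hk := key (Fin.last m)
    rw [hrl] at hk
    exact hk.trans ⟨(γ j).takeUntil b hbj⟩
  · intro x
    -- nonempty
    have hnonnil : ¬ (γ i0).Nil := by
      rw [Walk.not_nil_iff_lt_length]; have := (hcyc i0).three_le_length; omega
    obtain ⟨w, hadj, q, hq⟩ := Walk.not_nil_iff.mp hnonnil
    have hwsup : w ∈ (γ i0).support := by rw [hq]; simp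
    have hne : Nonempty {y : V | y ≠ x} := by
      by_cases hvx : v i0 = x
      · exact ⟨⟨w, by simp only [Set.mem_setOf_eq]; exact fun h => hadj.ne (hvx ▸ h ▸ rfl)⟩⟩
      · exact ⟨⟨v i0, hvx⟩⟩
    rw [connected_iff]
    refine ⟨fun A B => ?_, hne⟩
    obtain ⟨a, hax⟩ := A
    obtain ⟨b, hbx⟩ := B
    obtain ⟨i, hai⟩ := hvert a
    obtain ⟨j, hbj⟩ := hvert b
    obtain ⟨m, r, hr0, hrl, hrk⟩ := hchain i j
    have key : ∀ k : Fin (m+1), ∃ (c' : V) (hc' : c' ∈ ({y : V | y ≠ x} : Set V)),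
        c' ∈ (γ (r k)).support ∧
        (G.induce {y : V | y ≠ x}).Reachable ⟨a, hax⟩ ⟨c', hc'⟩ := by
      intro k
      induction k using Fin.induction with
      | zero => exact ⟨a, hax, hr0 ▸ hai, Reachable.refl _⟩
      | succ k ihk =>
        obtain ⟨c', hc', hcs, hcr⟩ := ihk
        obtain ⟨e, he1, he2⟩ := hrk k
        obtain ⟨⟨p, q⟩, rfl⟩ : ∃ z : V × V, e = s(z.1, z.2) :=
          ⟨e.out, e.out_eq.symm⟩
        have hpq : p ≠ q := (Walk.edges_subset_edgeSet _ he1).ne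
        have hp1 : p ∈ (γ (r k.castSucc)).support := Walk.fst_mem_support_of_mem_edges _ he1
        have hp2 : p ∈ (γ (r k.succ)).support := Walk.fst_mem_support_of_mem_edges _ he2
        have hq1 : q ∈ (γ (r k.castSucc)).support := Walk.snd_mem_support_of_mem_edges _ he1
        have hq2 : q ∈ (γ (r k.succ)).support := Walk.snd_mem_support_of_mem_edges _ he2
        by_cases hpx : p = x
        · have hqx : q ≠ x := fun h => hpq (hpx.trans h.symm)
          exact ⟨q, hqx, hq2, hcr.trans (cycle_avoid (hcyc (r k.castSucc)) hcs hq1 hc' hqx)⟩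
        · exact ⟨p, hpx, hp2, hcr.trans (cycle_avoid (hcyc (r k.castSucc)) hcs hp1 hc' hpx)⟩
    obtain ⟨c', hc', hcs, hcr⟩ := key (Fin.last m)
    rw [hrl] at hcs
    exact hcr.trans (cycle_avoid (hcyc j) hcs hbj hc' hbx)
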